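/- Fix a positive integer ρ. For each integer r, in ℚ[[v]] let u be the unique power series with constant term 1 satisfying u^{ρ²} = (1+v)^{r²−ρ²}, let h be the unique power series with constant term 1 satisfying h^{ρ²} = (1+v)^{r²}, and set w_r(v) = v·u (which has zero constant term and linear coefficient 1). Let G_r, F_r ∈ ℚ[[w]] be the unique power series with G_r(w_r(v)) = 1+v and F_r(w_r(v)) = h·(1+(r²/ρ²)v)^{−1} in ℚ[[v]]. Then for every integer n ≥ 0 there exist polynomials p_n, q_n ∈ ℚ[X] of degree at most 2n such that for every integer r, the coefficient of w^n in G_r equals p_n(r) and the coefficient of w^n in F_r equals q_n(r). -/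

import Mathlib

open PowerSeries

/-- Composition (substitution) `f(g)` of formal power series, correct whenever the
constant term of `g` vanishes. -/
noncomputable def comp (f g : ℚ⟦X⟧) : ℚ⟦X⟧ :=
  PowerSeries.mk fun n => ∑ k ∈ Finset.range (n + 1), coeff k f * coeff n (g ^ k)

/-- Integer power of a formal power series (using the formal inverse for negative
exponents). -/
noncomputable def zp (f : ℚ⟦X⟧) (n : ℤ) : ℚ⟦X⟧ :=
  f ^ n.toNat * f⁻¹ ^ (-n).toNat

namespace VerlindeAux

/-- Families of coefficients that are polynomial in `r` with degree at most `2k`. -/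
def PolyFam (c : ℕ → ℤ → ℚ) : Prop :=
  ∀ k, ∃ p : Polynomial ℚ, p.natDegree ≤ 2 * k ∧ ∀ r : ℤ, c k r = p.eval (r : ℚ)

/-- Families of power series whose coefficients are polynomial in `r`. -/
def PF (A : ℤ → ℚ⟦X⟧) : Prop :=
  ∀ k, ∃ p : Polynomial ℚ, p.natDegree ≤ 2 * k ∧ ∀ r : ℤ, coeff k (A r) = p.eval (r : ℚ)

lemma PF_congr {A B : ℤ → ℚ⟦X⟧} (h : ∀ r, A r = B r) (hA : PF A) : PF B := by
  intro k
  obtain ⟨p, h1, h2⟩ := hA k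
  exact ⟨p, h1, fun r => by rw [← h r]; exact h2 r⟩

lemma polyfam_rec (c d : ℕ → ℤ → ℚ) (e : ℕ → ℕ → ℤ → ℚ)
    (hd : PolyFam d)
    (he : ∀ k j, j < k → ∃ p : Polynomial ℚ,
      p.natDegree ≤ 2 * (k - j) ∧ ∀ r : ℤ, e k j r = p.eval (r : ℚ))
    (hrec : ∀ k r, c k r = d k r + ∑ j ∈ Finset.range k, c j r * e k j r) :
    PolyFam c := by
  intro k
  induction k using Nat.strong_induction_on with
  | _ k ih =>
  obtain ⟨pd, hpd, hpdev⟩ := hd k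
  have hPj : ∀ j, ∃ p : Polynomial ℚ,
      (j < k → p.natDegree ≤ 2 * j ∧ ∀ r : ℤ, c j r = p.eval (r : ℚ)) := by
    intro j
    by_cases hj : j < k
    · obtain ⟨p, h1, h2⟩ := ih j hj; exact ⟨p, fun _ => ⟨h1, h2⟩⟩
    · exact ⟨0, fun hc => absurd hc hj⟩
  choose P hP using hPj
  have hEj : ∀ j, ∃ p : Polynomial ℚ,
      (j < k → p.natDegree ≤ 2 * (k - j) ∧ ∀ r : ℤ, e k j r = p.eval (r : ℚ)) := by
    intro j
    by_cases hj : j < k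
    · obtain ⟨p, h1, h2⟩ := he k j hj; exact ⟨p, fun _ => ⟨h1, h2⟩⟩
    · exact ⟨0, fun hc => absurd hc hj⟩
  choose E hE using hEj
  refine ⟨pd + ∑ j ∈ Finset.range k, P j * E j, ?_, ?_⟩
  · refine le_trans (Polynomial.natDegree_add_le _ _) (max_le hpd ?_)
    apply Polynomial.natDegree_sum_le_of_forall_le
    intro j hj
    have hj' := Finset.mem_range.mp hj
    calc (P j * E j).natDegree ≤ (P j).natDegree + (E j).natDegree :=
          Polynomial.natDegree_mul_le
    _ ≤ 2 * j + 2 * (k - j) := add_le_add (hP j hj').1 (hE j hj').1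
    _ = 2 * k := by omega
  · intro r
    rw [hrec k r, Polynomial.eval_add, Polynomial.eval_finset_sum]
    congr 1
    · exact hpdev r
    · refine Finset.sum_congr rfl fun j hj => ?_
      have hj' := Finset.mem_range.mp hj
      rw [Polynomial.eval_mul, (hP j hj').2 r, (hE j hj').2 r]

lemma PF_const (f : ℚ⟦X⟧) : PF fun _ => f := by
  intro k
  exact ⟨Polynomial.C (coeff k f), by simp, by simp⟩

lemma PF_mul {A B : ℤ → ℚ⟦X⟧} (hA : PF A) (hB : PF B) : PF fun r => A r * B r := by
  intro k
  choose P hP hPev using hA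
  choose Q hQ hQev using hB
  refine ⟨∑ i ∈ Finset.range (k + 1), P i * Q (k - i), ?_, ?_⟩
  · apply Polynomial.natDegree_sum_le_of_forall_le
    intro i hi
    have hi' := Finset.mem_range.mp hi
    calc (P i * Q (k - i)).natDegree ≤ (P i).natDegree + (Q (k - i)).natDegree :=
          Polynomial.natDegree_mul_le
    _ ≤ 2 * i + 2 * (k - i) := add_le_add (hP i) (hQ (k - i))
    _ = 2 * k := by omega
  · intro r
    dsimp only
    rw [coeff_mul, Finset.Nat.sum_antidiagonal_eq_sum_range_succ_mk, Polynomial.eval_finset_sum]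
    exact Finset.sum_congr rfl fun i _ => by rw [Polynomial.eval_mul, ← hPev, ← hQev]

lemma PF_pow {A : ℤ → ℚ⟦X⟧} (hA : PF A) : ∀ n : ℕ, PF fun r => A r ^ n := by
  intro n
  induction n with
  | zero => exact PF_congr (fun r => (pow_zero (A r)).symm) (PF_const 1)
  | succ n ih =>
    exact PF_congr (fun r => (pow_succ (A r) n).symm) (PF_mul ih hA)

lemma PF_inv {B : ℤ → ℚ⟦X⟧} (hB0 : ∀ r, constantCoeff (B r) = 1) (hB : PF B) :
    PF fun r => (B r)⁻¹ := by
  apply polyfam_rec _ (fun k _ => if k = 0 then 1 else 0)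
      (fun k j r => -(coeff (k - j) (B r)))
  · intro k
    refine ⟨if k = 0 then 1 else 0, ?_, ?_⟩
    · split <;> simp
    · intro r; split <;> simp_all
  · intro k j _
    obtain ⟨p, h1, h2⟩ := hB (k - j)
    exact ⟨-p, by simpa using h1, fun r => by rw [Polynomial.eval_neg, ← h2]⟩
  · intro k r
    have h1 : (B r)⁻¹ * B r = 1 :=
      PowerSeries.inv_mul_cancel _ (by rw [hB0]; norm_num)
    have h2 := congrArg (coeff k) h1
    rw [coeff_mul, Finset.Nat.sum_antidiagonal_eq_sum_range_succ_mk,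
      Finset.sum_range_succ, Nat.sub_self, coeff_zero_eq_constantCoeff, hB0, mul_one,
      PowerSeries.coeff_one] at h2
    simp only [mul_neg, Finset.sum_neg_distrib]
    linarith [h2]

lemma coeff_oneX_pow (n k : ℕ) : coeff k ((1 + X : ℚ⟦X⟧) ^ n) = n.choose k := by
  induction n generalizing k with
  | zero => cases k <;> simp
  | succ n ih =>
    rw [pow_succ, mul_add, mul_one, map_add]
    cases k with
    | zero => simp [ih, PowerSeries.coeff_zero_mul_X]
    | succ k =>
      rw [ih, PowerSeries.coeff_succ_mul_X, ih, Nat.choose_succ_succ]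
      push_cast
      ring

lemma PF_binom : PF fun r : ℤ => (1 + X : ℚ⟦X⟧) ^ (r ^ 2).toNat := by
  intro k
  refine ⟨Polynomial.C ((k.factorial : ℚ))⁻¹ *
      (descPochhammer ℚ k).comp (Polynomial.X ^ 2), ?_, ?_⟩
  · refine le_trans Polynomial.natDegree_mul_le ?_
    rw [Polynomial.natDegree_C, Polynomial.natDegree_comp, descPochhammer_natDegree,
      Polynomial.natDegree_X_pow]
    omega
  · intro r
    dsimp only
    rw [coeff_oneX_pow, Polynomial.eval_mul, Polynomial.eval_C, Polynomial.eval_comp,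
      Polynomial.eval_pow, Polynomial.eval_X]
    have h1 : ((r : ℚ)) ^ 2 = (((r ^ 2).toNat : ℕ) : ℚ) := by
      have h2 : ((r ^ 2).toNat : ℤ) = r ^ 2 := Int.toNat_of_nonneg (sq_nonneg r)
      exact_mod_cast (congrArg (fun t : ℤ => (t : ℚ)) h2).symm
    rw [h1, descPochhammer_eval_eq_descFactorial,
      Nat.descFactorial_eq_factorial_mul_choose]
    push_cast
    rw [← mul_assoc, inv_mul_cancel₀ (by exact_mod_cast k.factorial_ne_zero), one_mul]

lemma zp_of_nonneg (f : ℚ⟦X⟧) {n : ℤ} (hn : 0 ≤ n) : zp f n = f ^ n.toNat := by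
  rw [zp, Int.toNat_eq_zero.mpr (by omega : -n ≤ 0), pow_zero, mul_one]

/-- `1 + X` as a unit of `ℚ⟦X⟧`. -/
noncomputable def oX : (ℚ⟦X⟧)ˣ where
  val := 1 + X
  inv := (1 + X : ℚ⟦X⟧)⁻¹
  val_inv := PowerSeries.mul_inv_cancel _ (by simp)
  inv_val := PowerSeries.inv_mul_cancel _ (by simp)

lemma zp_eq (n : ℤ) : zp (1 + X : ℚ⟦X⟧) n = ((oX ^ n : (ℚ⟦X⟧)ˣ) : ℚ⟦X⟧) := by
  cases n with
  | ofNat m =>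
    rw [Int.ofNat_eq_coe, zpow_natCast, zp]
    simp [oX]
  | negSucc m =>
    rw [zpow_negSucc, ← inv_pow, zp]
    simp [oX, Int.neg_negSucc]

lemma zp_add (a b : ℤ) : zp (1 + X : ℚ⟦X⟧) (a + b) = zp (1 + X) a * zp (1 + X) b := by
  rw [zp_eq, zp_eq, zp_eq, zpow_add, Units.val_mul]

lemma PF_root {A : ℤ → ℚ⟦X⟧} {m : ℕ} (hm : 0 < m)
    (hA0 : ∀ r, constantCoeff (A r) = 1)
    (hpow : PF fun r => A r ^ m) : PF A := by
  have hz0 : ∀ r : ℤ, coeff 0 (A r ^ m) = 1 := by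
    intro r
    simp only [coeff_zero_eq_constantCoeff, map_pow, hA0 r, one_pow]
  intro K0
  refine polyfam_rec (fun k r => coeff k (A r)) (fun k _ => if k = 0 then 1 else 0)
      (fun k j r => (((k : ℚ) - j - m * j) / (m * k)) * coeff (k - j) (A r ^ m))
      ?_ ?_ ?_ K0
  · intro k
    refine ⟨if k = 0 then 1 else 0, ?_, ?_⟩
    · split <;> simp
    · intro r; split <;> simp_all
  · intro k j _
    obtain ⟨p, h1, h2⟩ := hpow (k - j)
    refine ⟨Polynomial.C (((k : ℚ) - j - m * j) / (m * k)) * p, ?_, ?_⟩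
    · exact le_trans Polynomial.natDegree_mul_le (by simpa using h1)
    · intro r
      rw [Polynomial.eval_mul, Polynomial.eval_C, ← h2]
  · intro k r
    cases k with
    | zero =>
      simp [coeff_zero_eq_constantCoeff, hA0 r]
    | succ K =>
      have hm0 : (m : ℚ) ≠ 0 := Nat.cast_ne_zero.mpr hm.ne'
      have hK0 : ((K : ℚ) + 1) ≠ 0 := by positivity
      -- the differential equation
      have hkey : d⁄dX ℚ (A r ^ m) * A r
          = PowerSeries.C (m : ℚ) * (A r ^ m * d⁄dX ℚ (A r)) := by
        rw [Derivation.leibniz_pow, smul_eq_mul, nsmul_eq_mul]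
        rw [PowerSeries.C_eq_algebraMap]
        have hA : A r ^ (m - 1) * A r = A r ^ m := by
          rw [← pow_succ, Nat.sub_add_cancel hm]
        calc (m : ℚ⟦X⟧) * (A r ^ (m - 1) * d⁄dX ℚ (A r)) * A r
            = (m : ℚ⟦X⟧) * ((A r ^ (m - 1) * A r) * d⁄dX ℚ (A r)) := by ring
          _ = algebraMap ℚ ℚ⟦X⟧ (m : ℚ) * (A r ^ m * d⁄dX ℚ (A r)) := by
              rw [hA]; norm_num
      have hL : coeff K (d⁄dX ℚ (A r ^ m) * A r)
          = ∑ i ∈ Finset.range (K + 1),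
              coeff (i + 1) (A r ^ m) * ((i : ℚ) + 1) * coeff (K - i) (A r) := by
        rw [coeff_mul, Finset.Nat.sum_antidiagonal_eq_sum_range_succ_mk]
        exact Finset.sum_congr rfl fun i _ => by rw [PowerSeries.coeff_derivative]
      have hR : coeff K (PowerSeries.C (m : ℚ) * (A r ^ m * d⁄dX ℚ (A r)))
          = (m : ℚ) * ((∑ i ∈ Finset.range (K + 1),
              coeff (i + 1) (A r ^ m) * (coeff (K - i) (A r) * ((K : ℚ) - (i : ℚ))))
                + coeff (K + 1) (A r) * ((K : ℚ) + 1)) := by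
        rw [PowerSeries.coeff_C_mul, coeff_mul,
          Finset.Nat.sum_antidiagonal_eq_sum_range_succ_mk]
        congr 1
        conv_lhs => rw [Finset.sum_range_succ']
        rw [Finset.sum_range_succ]
        simp only [PowerSeries.coeff_derivative]
        have hre : ∀ i ∈ Finset.range K,
            coeff (i + 1) (A r ^ m) * (coeff (K - (i + 1) + 1) (A r)
                * ((K - (i + 1) : ℕ) + 1 : ℚ))
              = coeff (i + 1) (A r ^ m)
                * (coeff (K - i) (A r) * ((K : ℚ) - (i : ℚ))) := by
          intro i hi
          have hiK : i + 1 ≤ K := Finset.mem_range.mp hi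
          have e1 : K - (i + 1) + 1 = K - i := by omega
          rw [e1]
          have e2 : ((K - (i + 1) : ℕ) + 1 : ℚ) = (K : ℚ) - (i : ℚ) := by
            rw [Nat.cast_sub hiK]
            push_cast
            ring
          rw [e2]
        rw [Finset.sum_congr rfl hre]
        rw [hz0 r]
        simp only [Nat.sub_zero, Nat.sub_self, sub_self, mul_zero, add_zero, one_mul]
      have h2 := hL.symm.trans ((congrArg (coeff K) hkey).trans hR)
      have key : (m : ℚ) * ((K : ℚ) + 1) * coeff (K + 1) (A r)
          = ∑ i ∈ Finset.range (K + 1),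
              (coeff (i + 1) (A r ^ m) * ((i : ℚ) + 1) * coeff (K - i) (A r)
                - (m : ℚ) * (coeff (i + 1) (A r ^ m)
                    * (coeff (K - i) (A r) * ((K : ℚ) - (i : ℚ))))) := by
        rw [Finset.sum_sub_distrib, ← Finset.mul_sum]
        linarith [h2]
      rw [if_neg (Nat.succ_ne_zero K), zero_add]
      push_cast
      have hsum : ∑ j ∈ Finset.range (K + 1),
          coeff j (A r) * (((K : ℚ) + 1 - (j : ℚ) - (m : ℚ) * (j : ℚ))
            / ((m : ℚ) * ((K : ℚ) + 1)) * coeff (K + 1 - j) (A r ^ m))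
          = (∑ i ∈ Finset.range (K + 1),
              (coeff (i + 1) (A r ^ m) * ((i : ℚ) + 1) * coeff (K - i) (A r)
                - (m : ℚ) * (coeff (i + 1) (A r ^ m)
                    * (coeff (K - i) (A r) * ((K : ℚ) - (i : ℚ))))))
            / ((m : ℚ) * ((K : ℚ) + 1)) := by
        rw [Finset.sum_div, ← Finset.sum_range_reflect]
        refine Finset.sum_congr rfl fun i hi => ?_
        have hiK : i ≤ K := by
          have := Finset.mem_range.mp hi; omega
        rw [show K + 1 - 1 - i = K - i from by omega]
        rw [show K + 1 - (K - i) = i + 1 from by omega]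
        rw [Nat.cast_sub hiK]
        field_simp
        ring
      rw [hsum, ← key]
      field_simp

lemma PF_of_comp {Gf uu RHS : ℤ → ℚ⟦X⟧}
    (hu0 : ∀ r, constantCoeff (uu r) = 1)
    (hPFu : PF uu)
    (hR : PF RHS)
    (hcomp : ∀ r, comp (Gf r) (X * uu r) = RHS r) : PF Gf := by
  apply polyfam_rec _ (fun n r => coeff n (RHS r))
      (fun n k r => -(coeff (n - k) (uu r ^ k)))
  · exact hR
  · intro n k hk
    obtain ⟨p, h1, h2⟩ := PF_pow hPFu k (n - k)
    exact ⟨-p, by simpa using h1, fun r => by rw [Polynomial.eval_neg, ← h2]⟩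
  · intro n r
    have h1 := congrArg (coeff n) (hcomp r)
    rw [comp, coeff_mk] at h1
    have h2 : ∀ k ∈ Finset.range (n + 1),
        coeff k (Gf r) * coeff n ((X * uu r) ^ k)
          = coeff k (Gf r) * coeff (n - k) (uu r ^ k) := by
      intro k hk
      have hkn : k ≤ n := by have := Finset.mem_range.mp hk; omega
      rw [mul_pow, PowerSeries.coeff_X_pow_mul', if_pos hkn]
    rw [Finset.sum_congr rfl h2, Finset.sum_range_succ, Nat.sub_self] at h1
    have h3 : coeff 0 (uu r ^ n) = 1 := by
      simp only [coeff_zero_eq_constantCoeff, map_pow, hu0 r, one_pow]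
    rw [h3, mul_one] at h1
    simp only [mul_neg, Finset.sum_neg_distrib]
    linarith [h1]

end VerlindeAux

open VerlindeAux in
/-- Polynomiality in `r` of the coefficients of the rank-ρ universal Verlinde series
`G_r = g_{r/ρ}` and `F_r = f_{r/ρ}`, defined by `G_r(w_r(v)) = 1+v` and
`F_r(w_r(v)) = h·(1+(r²/ρ²)v)⁻¹` where `w_r(v) = v·u`, `u^{ρ²} = (1+v)^{r²-ρ²}`,
`h^{ρ²} = (1+v)^{r²}`, `u(0) = h(0) = 1`: the coefficients of `w^n` in `G_r` and `F_r`
are polynomials in `r` of degree at most `2n`. -/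
theorem coeff_G_F_polynomial_in_r (ρ : ℕ) (hρ : 0 < ρ)
    (u h G F : ℤ → ℚ⟦X⟧)
    (hu0 : ∀ r : ℤ, constantCoeff (u r) = 1)
    (hu : ∀ r : ℤ, (u r) ^ (ρ ^ 2) = zp (1 + X) (r ^ 2 - (ρ : ℤ) ^ 2))
    (hh0 : ∀ r : ℤ, constantCoeff (h r) = 1)
    (hh : ∀ r : ℤ, (h r) ^ (ρ ^ 2) = zp (1 + X) (r ^ 2))
    (hG : ∀ r : ℤ, comp (G r) (X * u r) = 1 + X)
    (hF : ∀ r : ℤ, comp (F r) (X * u r) =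
      h r * (1 + C ((r : ℚ) ^ 2 / (ρ : ℚ) ^ 2) * X)⁻¹) :
    ∀ n : ℕ, ∃ p q : Polynomial ℚ,
      p.natDegree ≤ 2 * n ∧ q.natDegree ≤ 2 * n ∧
      ∀ r : ℤ, coeff n (G r) = p.eval (r : ℚ) ∧ coeff n (F r) = q.eval (r : ℚ) := by
  have hm : 0 < ρ ^ 2 := by positivity
  -- the binomial family `(1+X)^{r²}`
  have hZh : PF fun r : ℤ => zp (1 + X) (r ^ 2) :=
    PF_congr (fun r => (zp_of_nonneg _ (sq_nonneg r)).symm) PF_binom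
  -- the family `(1+X)^{r²-ρ²}`
  have hZu : PF fun r : ℤ => zp (1 + X) (r ^ 2 - (ρ : ℤ) ^ 2) := by
    refine PF_congr (fun r => ?_) (PF_mul hZh (PF_const (zp (1 + X) (-(ρ : ℤ) ^ 2))))
    rw [← zp_add]
    congr 1
  have hPFu : PF u := PF_root hm hu0 (PF_congr (fun r => (hu r).symm) hZu)
  have hPFh : PF h := PF_root hm hh0 (PF_congr (fun r => (hh r).symm) hZh)
  -- the family `1 + (r²/ρ²)X`
  have hρ0 : ((ρ : ℚ)) ^ 2 ≠ 0 := by positivity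
  have hPFB : PF fun r : ℤ => (1 + C ((r : ℚ) ^ 2 / (ρ : ℚ) ^ 2) * X : ℚ⟦X⟧) := by
    intro k
    refine ⟨if k = 0 then 1 else if k = 1 then
        Polynomial.C (((ρ : ℚ) ^ 2)⁻¹) * Polynomial.X ^ 2 else 0, ?_, ?_⟩
    · rcases k with - | - | k
      · simp
      · simp only [if_neg one_ne_zero, if_pos rfl]
        refine le_trans Polynomial.natDegree_mul_le ?_
        simp
      · simp
    · intro r
      rw [map_add, PowerSeries.coeff_one, PowerSeries.coeff_C_mul, PowerSeries.coeff_X]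
      rcases k with - | - | k
      · simp
      · simp [div_eq_inv_mul]
      · simp
  have hB0 : ∀ r : ℤ, constantCoeff (1 + C ((r : ℚ) ^ 2 / (ρ : ℚ) ^ 2) * X : ℚ⟦X⟧) = 1 := by
    intro r
    simp
  have hPFG : PF G := PF_of_comp hu0 hPFu (PF_const (1 + X)) hG
  have hPFF : PF F :=
    PF_of_comp hu0 hPFu (PF_mul hPFh (PF_inv hB0 hPFB)) hF
  intro n
  obtain ⟨p, hp1, hp2⟩ := hPFG n
  obtain ⟨q, hq1, hq2⟩ := hPFF n
  exact ⟨p, q, hp1, hq1, fun r => ⟨hp2 r, hq2 r⟩⟩
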